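/- Let (V,E,μ) be an infinite, connected, locally finite weighted graph, 1 < p < ∞, σ > p−1, and let o ∈ V. For R ≥ 1 let g_R : V → ℝ be a local p-Green function of the ball B_R with pole at o, and set L_R = ∑_{x∈B_R} g_R(x)^σ μ(x). If u : V → ℝ is nonnegative, not identically zero, and satisfies −Δ_p u(x) ≥ u(x)^σ for all x ∈ V, then for every R ≥ 1, L_R ≤ (σ/(σ−p+1)) (g_R(o)/u(o))^{σ−p+1}. -/

import Mathlib

open scoped BigOperators ENNReal

/-- `Φ_p(t) = |t|^{p-2} t`. -/
noncomputable def Phi (p t : ℝ) : ℝ := |t| ^ (p - 2) * t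

section PhiLemmas

variable {p : ℝ} (hp : 1 < p)

lemma Phi_neg (p t : ℝ) : Phi p (-t) = -Phi p t := by
  simp [Phi, abs_neg, mul_neg]

lemma Phi_of_nonneg (hp : 1 < p) {t : ℝ} (ht : 0 ≤ t) : Phi p t = t ^ (p - 1) := by
  rcases eq_or_lt_of_le ht with h | h
  · simp [Phi, ← h, Real.zero_rpow (by linarith : p - 1 ≠ 0)]
  · rw [Phi, abs_of_pos h, ← Real.rpow_add_one (ne_of_gt h)]
    ring_nf

lemma Phi_nonneg (hp : 1 < p) {t : ℝ} (ht : 0 ≤ t) : 0 ≤ Phi p t := by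
  rw [Phi_of_nonneg hp ht]; exact Real.rpow_nonneg ht _

lemma Phi_pos (hp : 1 < p) {t : ℝ} (ht : 0 < t) : 0 < Phi p t := by
  rw [Phi_of_nonneg hp ht.le]; exact Real.rpow_pos_of_pos ht _

lemma Phi_eq_zero_iff (hp : 1 < p) {t : ℝ} : Phi p t = 0 ↔ t = 0 := by
  constructor
  · intro h
    by_contra hne
    rcases lt_or_gt_of_ne hne with hlt | hgt
    · have : 0 < Phi p (-t) := Phi_pos hp (by linarith)
      rw [Phi_neg] at this; linarith
    · exact (Phi_pos hp hgt).ne' h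
  · rintro rfl; simp [Phi]

lemma Phi_mono (hp : 1 < p) : Monotone (Phi p) := by
  intro s t hst
  rcases le_or_gt 0 s with hs | hs
  · rw [Phi_of_nonneg hp hs, Phi_of_nonneg hp (hs.trans hst)]
    exact Real.rpow_le_rpow hs hst (by linarith)
  · rcases le_or_gt 0 t with ht | ht
    · have h1 : Phi p s ≤ 0 := by
        have : 0 ≤ Phi p (-s) := Phi_nonneg hp (by linarith)
        rw [Phi_neg] at this; linarith
      exact h1.trans (Phi_nonneg hp ht)
    · have h2 : Phi p (-t) ≤ Phi p (-s) := by
        rw [Phi_of_nonneg hp (by linarith : (0:ℝ) ≤ -t), Phi_of_nonneg hp (by linarith : (0:ℝ) ≤ -s)]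
        exact Real.rpow_le_rpow (by linarith) (by linarith) (by linarith)
      rw [Phi_neg, Phi_neg] at h2; linarith

lemma Phi_smul (hp : 1 < p) {r : ℝ} (hr : 0 ≤ r) (t : ℝ) :
    Phi p (r * t) = r ^ (p - 1) * Phi p t := by
  rcases eq_or_lt_of_le hr with h | h
  · simp [← h, Phi, Real.zero_rpow (by linarith : p - 1 ≠ 0)]
  · rw [Phi, Phi, abs_mul, abs_of_pos h, Real.mul_rpow h.le (abs_nonneg t)]
    have hr1 : r ^ (p-1) = r ^ (p-2) * r := by
      rw [← Real.rpow_add_one (ne_of_gt h)]; ring_nf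
    rw [hr1]; ring

end PhiLemmas

-- Bernoulli key: for 0 ≤ t ≤ 1, 0 < β < σ: β*(1 - t^σ) ≤ σ*(1 - t^β)
lemma bern_key {σ β t : ℝ} (hβ : 0 < β) (hβσ : β < σ) (ht0 : 0 ≤ t) :
    β * (1 - t ^ σ) ≤ σ * (1 - t ^ β) := by
  have h1 : (-1:ℝ) ≤ t ^ β - 1 := by
    have := Real.rpow_nonneg ht0 β; linarith
  have h2 : 1 ≤ σ / β := (one_le_div hβ).2 hβσ.le
  have h3 := one_add_mul_self_le_rpow_one_add h1 h2
  have h4 : (1 + (t ^ β - 1)) ^ (σ / β) = t ^ σ := by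
    have : (1:ℝ) + (t ^ β - 1) = t ^ β := by ring
    rw [this, ← Real.rpow_mul ht0]
    congr 1
    field_simp
  rw [h4] at h3
  have h5 := mul_le_mul_of_nonneg_left h3 hβ.le
  have h6 : β * (σ / β) = σ := by field_simp
  nlinarith [h5]

-- lower Bernoulli: for 0 < t ≤ 1: σ * t^(σ-β) * (1 - t^β) ≤ β * (1 - t^σ)
lemma bern_key' {σ β t : ℝ} (hβ : 0 < β) (hβσ : β < σ) (ht0 : 0 < t) (ht1 : t ≤ 1) :
    σ * (t ^ (σ - β) * (1 - t ^ β)) ≤ β * (1 - t ^ σ) := by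
  have hbne : t ^ β ≠ 0 := (Real.rpow_pos_of_pos ht0 β).ne'
  have h1 : (-1:ℝ) ≤ t ^ (-β) - 1 := by
    have := Real.rpow_nonneg ht0.le (-β); linarith
  have h2 : 1 ≤ σ / β := (one_le_div hβ).2 hβσ.le
  have h3 := one_add_mul_self_le_rpow_one_add h1 h2
  have h4 : (1 + (t ^ (-β) - 1)) ^ (σ / β) = t ^ (-σ) := by
    have : (1:ℝ) + (t ^ (-β) - 1) = t ^ (-β) := by ring
    rw [this, ← Real.rpow_mul ht0.le]
    congr 1
    field_simp
  rw [h4] at h3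
  -- multiply by t^σ > 0
  have hts : (0:ℝ) < t ^ σ := Real.rpow_pos_of_pos ht0 σ
  have h5 := mul_le_mul_of_nonneg_right h3 hts.le
  have e1 : t ^ (-σ) * t ^ σ = 1 := by
    rw [← Real.rpow_add ht0]; simp
  have e2 : t ^ (-β) * t ^ σ = t ^ (σ - β) := by
    rw [← Real.rpow_add ht0]; ring_nf
  have e3 : t ^ (σ - β) * t ^ β = t ^ σ := by
    rw [← Real.rpow_add ht0]; ring_nf
  -- h5 : (1 + σ/β*(t^(-β)-1)) * t^σ ≤ t^(-σ) * t^σ = 1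
  rw [e1] at h5
  have h6 : σ / β * (t ^ (σ - β) - t ^ σ) ≤ 1 - t ^ σ := by
    nlinarith [h5, e2]
  have h7 := mul_le_mul_of_nonneg_left h6 hβ.le
  have h8 : β * (σ / β * (t ^ (σ - β) - t ^ σ)) = σ * (t ^ (σ - β) - t ^ σ) := by
    field_simp
  have h9 : σ * (t ^ (σ - β) - t ^ σ) ≤ β * (1 - t ^ σ) := by
    rw [h8] at h7; linarith
  have h10 : t ^ (σ - β) * (1 - t ^ β) = t ^ (σ - β) - t ^ σ := by
    rw [← e3]; ring
  rw [h10]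
  linarith

-- (i):  β (b^σ - a^σ) ≤ σ b^(σ-β) (b^β - a^β)  for 0 ≤ a ≤ b
lemma pow_upper {σ β a b : ℝ} (hβ : 0 < β) (hβσ : β < σ) (ha : 0 ≤ a) (hab : a ≤ b) :
    β * (b ^ σ - a ^ σ) ≤ σ * (b ^ (σ - β) * (b ^ β - a ^ β)) := by
  have hb : 0 ≤ b := ha.trans hab
  rcases eq_or_lt_of_le hb with hb0 | hb0
  · have ha0 : a = 0 := le_antisymm (hab.trans hb0.ge) ha
    simp [← hb0, ha0, Real.zero_rpow (by linarith : σ ≠ 0),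
      Real.zero_rpow (by linarith : β ≠ 0)]
  · set t := a / b with htdef
    have ht0 : 0 ≤ t := div_nonneg ha hb0.le
    have hta : t * b = a := div_mul_cancel₀ a hb0.ne'
    have ea : ∀ e : ℝ, a ^ e = t ^ e * b ^ e := by
      intro e; rw [← hta, Real.mul_rpow ht0 hb0.le]
    have key := bern_key hβ hβσ ht0
    have ebb : b ^ (σ - β) * b ^ β = b ^ σ := by
      rw [← Real.rpow_add hb0]; ring_nf
    have hbσ : (0:ℝ) ≤ b ^ σ := Real.rpow_nonneg hb0.le σ
    have h1 : β * ((1 - t ^ σ) * b ^ σ) ≤ σ * ((1 - t ^ β) * b ^ σ) := by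
      nlinarith [mul_le_mul_of_nonneg_right key hbσ]
    calc β * (b ^ σ - a ^ σ) = β * ((1 - t ^ σ) * b ^ σ) := by rw [ea σ]; ring
      _ ≤ σ * ((1 - t ^ β) * b ^ σ) := h1
      _ = σ * (b ^ (σ - β) * (b ^ β - a ^ β)) := by
          rw [ea β, ← ebb]; ring

-- (ii): σ a^(σ-β) (b^β - a^β) ≤ β (b^σ - a^σ)  for 0 ≤ a ≤ b
lemma pow_lower {σ β a b : ℝ} (hβ : 0 < β) (hβσ : β < σ) (ha : 0 ≤ a) (hab : a ≤ b) :
    σ * (a ^ (σ - β) * (b ^ β - a ^ β)) ≤ β * (b ^ σ - a ^ σ) := by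
  have hb : 0 ≤ b := ha.trans hab
  rcases eq_or_lt_of_le ha with ha0 | ha0
  · rw [← ha0]
    rw [Real.zero_rpow (by linarith : σ - β ≠ 0), Real.zero_rpow (by linarith : σ ≠ 0)]
    have : (0:ℝ) ≤ b ^ σ := Real.rpow_nonneg hb σ
    nlinarith
  · have hb0 : 0 < b := lt_of_lt_of_le ha0 hab
    set t := a / b with htdef
    have ht0 : 0 < t := div_pos ha0 hb0
    have ht1 : t ≤ 1 := (div_le_one hb0).2 hab
    have hta : t * b = a := div_mul_cancel₀ a hb0.ne'
    have ea : ∀ e : ℝ, a ^ e = t ^ e * b ^ e := by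
      intro e; rw [← hta, Real.mul_rpow ht0.le hb0.le]
    have key := bern_key' hβ hβσ ht0 ht1
    have ebb : b ^ (σ - β) * b ^ β = b ^ σ := by
      rw [← Real.rpow_add hb0]; ring_nf
    have hbσ : (0:ℝ) ≤ b ^ σ := Real.rpow_nonneg hb0.le σ
    have h1 : σ * (t ^ (σ - β) * (1 - t ^ β) * b ^ σ) ≤ β * ((1 - t ^ σ) * b ^ σ) := by
      nlinarith [mul_le_mul_of_nonneg_right key hbσ]
    calc σ * (a ^ (σ - β) * (b ^ β - a ^ β))
        = σ * (t ^ (σ - β) * (1 - t ^ β) * b ^ σ) := by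
          rw [ea (σ - β), ea β, ← ebb]; ring
      _ ≤ β * ((1 - t ^ σ) * b ^ σ) := h1
      _ = β * (b ^ σ - a ^ σ) := by rw [ea σ]; ring

section EW
variable {p σ : ℝ}

-- core: assuming g₁/u₁ ≤ g₂/u₂
lemma EW_core (hp : 1 < p) (hσ : p - 1 < σ) {u₁ u₂ g₁ g₂ : ℝ}
    (hu₁ : 0 < u₁) (hu₂ : 0 < u₂) (hg₁ : 0 ≤ g₁) (hg₂ : 0 ≤ g₂)
    (hab : g₁ / u₁ ≤ g₂ / u₂) :
    Phi p (u₂ - u₁) * ((g₂ / u₂) ^ σ - (g₁ / u₁) ^ σ) ≤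
      (σ / (σ - p + 1)) *
        (Phi p (g₂ - g₁) * ((g₂ / u₂) ^ (σ - p + 1) - (g₁ / u₁) ^ (σ - p + 1))) := by
  set β := σ - p + 1 with hβdef
  have hβ : 0 < β := by simp [hβdef]; linarith
  have hβσ : β < σ := by simp [hβdef]; linarith
  set a := g₁ / u₁ with hadef
  set b := g₂ / u₂ with hbdef
  have ha : 0 ≤ a := div_nonneg hg₁ hu₁.le
  have hb : 0 ≤ b := div_nonneg hg₂ hu₂.le
  have hg₁eq : g₁ = a * u₁ := by rw [hadef, div_mul_cancel₀ g₁ hu₁.ne']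
  have hg₂eq : g₂ = b * u₂ := by rw [hbdef, div_mul_cancel₀ g₂ hu₂.ne']
  set C := Phi p (u₂ - u₁) with hCdef
  set K := Phi p (g₂ - g₁) with hKdef
  have keyB : C * b ^ (p - 1) ≤ K := by
    have h1 : b * (u₂ - u₁) ≤ g₂ - g₁ := by
      rw [hg₁eq, hg₂eq]
      have : a * u₁ ≤ b * u₁ := mul_le_mul_of_nonneg_right hab hu₁.le
      nlinarith
    have h2 := Phi_mono hp h1
    rw [Phi_smul hp hb] at h2
    calc C * b ^ (p-1) = b ^ (p-1) * Phi p (u₂ - u₁) := by rw [hCdef]; ring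
      _ ≤ K := h2
  have keyA : C * a ^ (p - 1) ≤ K := by
    have h1 : a * (u₂ - u₁) ≤ g₂ - g₁ := by
      rw [hg₁eq, hg₂eq]
      have : a * u₂ ≤ b * u₂ := mul_le_mul_of_nonneg_right hab hu₂.le
      nlinarith
    have h2 := Phi_mono hp h1
    rw [Phi_smul hp ha] at h2
    calc C * a ^ (p-1) = a ^ (p-1) * Phi p (u₂ - u₁) := by rw [hCdef]; ring
      _ ≤ K := h2
  have hβne : p - 1 = σ - β := by rw [hβdef]; ring
  have hβσpos : 0 < σ := lt_trans hβ hβσ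
  have hβdiff : (0:ℝ) ≤ b ^ β - a ^ β := by
    have := Real.rpow_le_rpow ha hab hβ.le
    linarith
  rcases le_or_gt 0 C with hC | hC
  · -- C ≥ 0 : use pow_upper
    have hup := pow_upper hβ hβσ ha hab
    rw [← hβne] at hup
    -- multiply by C/β ≥ 0 ... do directly
    have h1 : C * (β * (b ^ σ - a ^ σ)) ≤ C * (σ * (b ^ (p-1) * (b ^ β - a ^ β))) :=
      mul_le_mul_of_nonneg_left hup hC
    have h2 : σ * ((C * b ^ (p-1)) * (b ^ β - a ^ β)) ≤ σ * (K * (b ^ β - a ^ β)) := by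
      apply mul_le_mul_of_nonneg_left _ hβσpos.le
      exact mul_le_mul_of_nonneg_right keyB hβdiff
    have h3 : β * (C * (b ^ σ - a ^ σ)) ≤ β * ((σ / β) * (K * (b ^ β - a ^ β))) := by
      have e : β * ((σ / β) * (K * (b ^ β - a ^ β))) = σ * (K * (b ^ β - a ^ β)) := by
        field_simp
      rw [e]; nlinarith [h1, h2]
    have := le_of_mul_le_mul_left (by linarith [h3] : β * (C * (b ^ σ - a ^ σ)) ≤ β * ((σ / β) * (K * (b ^ β - a ^ β)))) hβ
    linarith [this]
  · -- C < 0 : use pow_lower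
    have hlo := pow_lower hβ hβσ ha hab
    rw [← hβne] at hlo
    have h1 : C * (β * (b ^ σ - a ^ σ)) ≤ C * (σ * (a ^ (p-1) * (b ^ β - a ^ β))) := by
      exact mul_le_mul_of_nonpos_left hlo hC.le
    have h2 : σ * ((C * a ^ (p-1)) * (b ^ β - a ^ β)) ≤ σ * (K * (b ^ β - a ^ β)) := by
      apply mul_le_mul_of_nonneg_left _ hβσpos.le
      exact mul_le_mul_of_nonneg_right keyA hβdiff
    have h3 : β * (C * (b ^ σ - a ^ σ)) ≤ β * ((σ / β) * (K * (b ^ β - a ^ β))) := by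
      have e : β * ((σ / β) * (K * (b ^ β - a ^ β))) = σ * (K * (b ^ β - a ^ β)) := by
        field_simp
      rw [e]; nlinarith [h1, h2]
    have := le_of_mul_le_mul_left (h3 :) hβ
    linarith [this]

lemma EW (hp : 1 < p) (hσ : p - 1 < σ) {u₁ u₂ g₁ g₂ : ℝ}
    (hu₁ : 0 < u₁) (hu₂ : 0 < u₂) (hg₁ : 0 ≤ g₁) (hg₂ : 0 ≤ g₂) :
    Phi p (u₂ - u₁) * ((g₂ / u₂) ^ σ - (g₁ / u₁) ^ σ) ≤
      (σ / (σ - p + 1)) *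
        (Phi p (g₂ - g₁) * ((g₂ / u₂) ^ (σ - p + 1) - (g₁ / u₁) ^ (σ - p + 1))) := by
  rcases le_total (g₁ / u₁) (g₂ / u₂) with h | h
  · exact EW_core hp hσ hu₁ hu₂ hg₁ hg₂ h
  · have := EW_core hp hσ hu₂ hu₁ hg₂ hg₁ h
    have e1 : Phi p (u₁ - u₂) = -Phi p (u₂ - u₁) := by
      rw [← Phi_neg]; ring_nf
    have e2 : Phi p (g₁ - g₂) = -Phi p (g₂ - g₁) := by
      rw [← Phi_neg]; ring_nf
    rw [e1, e2] at this
    nlinarith [this]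
end EW


/-- Vertex measure `μ(x) = ∑_{y ~ x} μ_{xy}`. -/
noncomputable def vMeas {V : Type*} (G : SimpleGraph V) (w : V → V → ℝ) (x : V) : ℝ :=
  ∑ᶠ y ∈ {y | G.Adj x y}, w x y

/-- The `p`-Laplacian `Δ_p u(x) = μ(x)⁻¹ ∑_{y ~ x} μ_{xy} Φ_p(u(y) - u(x))`. -/
noncomputable def pLap {V : Type*} (G : SimpleGraph V) (w : V → V → ℝ) (p : ℝ)
    (u : V → ℝ) (x : V) : ℝ :=
  (vMeas G w x)⁻¹ * ∑ᶠ y ∈ {y | G.Adj x y}, w x y * Phi p (u y - u x)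

/-- The ball `B_R = {x : d(o,x) ≤ R}` with respect to the graph distance. -/
def ballSet {V : Type*} (G : SimpleGraph V) (o : V) (R : ℕ) : Set V :=
  {x | G.dist o x ≤ R}

section GraphLemmas

variable {V : Type*} {G : SimpleGraph V}

/-- propagation along walks -/
lemma prop_walk (hconn : G.Connected) (P : V → Prop)
    (hP : ∀ ⦃x y⦄, P x → G.Adj x y → P y) {x₀ : V} (h₀ : P x₀) : ∀ x, P x := by
  have key : ∀ {a b : V} (_ : G.Walk a b), P a → P b := by
    intro a b W
    induction W with
    | nil => exact id
    | cons h' W' ih => exact fun hPa => ih (hP hPa h')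
  intro x
  obtain ⟨W⟩ := hconn.preconnected x₀ x
  exact key W h₀

lemma exists_adj [Infinite V] (hconn : G.Connected) (x : V) : ∃ y, G.Adj x y := by
  obtain ⟨y, hy⟩ := exists_ne x
  obtain ⟨W⟩ := hconn.preconnected x y
  cases W with
  | nil => exact absurd rfl (Ne.symm hy)
  | cons h _ => exact ⟨_, h⟩

lemma vMeas_pos [Infinite V] (hconn : G.Connected) (hlf : ∀ x : V, {y | G.Adj x y}.Finite)
    {w : V → V → ℝ} (hwpos : ∀ x y, G.Adj x y → 0 < w x y) (x : V) :
    0 < vMeas G w x := by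
  rw [vMeas, finsum_mem_eq_finite_toFinset_sum _ (hlf x)]
  apply Finset.sum_pos
  · intro y hy
    exact hwpos x y ((hlf x).mem_toFinset.1 hy)
  · obtain ⟨y, hy⟩ := exists_adj hconn x
    exact ⟨y, (hlf x).mem_toFinset.2 hy⟩

lemma mulLap {w : V → V → ℝ} (hlf : ∀ x : V, {y | G.Adj x y}.Finite) (p : ℝ) (f : V → ℝ)
    (x : V) (hμ : vMeas G w x ≠ 0) :
    vMeas G w x * pLap G w p f x
      = ∑ y ∈ (hlf x).toFinset, w x y * Phi p (f y - f x) := by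
  rw [pLap, ← mul_assoc, mul_inv_cancel₀ hμ, one_mul,
    finsum_mem_eq_finite_toFinset_sum _ (hlf x)]

lemma ball_finite (hconn : G.Connected) (hlf : ∀ x : V, {y | G.Adj x y}.Finite) (o : V) :
    ∀ R : ℕ, {x | G.dist o x ≤ R}.Finite := by
  intro R
  induction R with
  | zero =>
    apply Set.Finite.subset (Set.finite_singleton o)
    intro x hx
    have : G.dist o x = 0 := Nat.le_zero.1 hx
    have := (hconn.dist_eq_zero_iff).1 this
    simp [this.symm]
  | succ n ih =>
    apply Set.Finite.subset (Set.Finite.union ih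
      (Set.Finite.biUnion ih (fun y _ => hlf y)))
    intro x hx
    rcases le_or_gt (G.dist o x) n with h | h
    · exact Or.inl h
    · have hd : G.dist o x = n + 1 := le_antisymm hx h
      have hne : G.dist o x ≠ 0 := by omega
      obtain ⟨W, hW⟩ := (hconn.preconnected o x).exists_walk_length_eq_dist
      have hl : W.reverse.length = G.dist o x := by
        rw [SimpleGraph.Walk.length_reverse, hW]
      right
      cases hWr : W.reverse with
      | nil =>
        rw [hWr] at hl
        simp only [SimpleGraph.Walk.length_nil] at hl
        omega
      | cons hadj Q =>
        rw [hWr] at hl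
        simp only [SimpleGraph.Walk.length_cons] at hl
        refine Set.mem_biUnion (?_ : G.dist o _ ≤ n) hadj.symm
        calc G.dist o _ = G.dist _ o := SimpleGraph.dist_comm
          _ ≤ Q.length := SimpleGraph.dist_le Q
          _ ≤ n := by omega

end GraphLemmas


/-- `g` is a local `p`-Green function of `Ω` with pole at `y`:
`g = 0` off `Ω`, `-Δ_p g = 0` on `Ω \ {y}`, and `-Δ_p g(y) = μ(y)⁻¹`. -/
def IsGreen {V : Type*} (G : SimpleGraph V) (w : V → V → ℝ) (p : ℝ)
    (Ω : Set V) (y : V) (g : V → ℝ) : Prop :=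
  (∀ x ∉ Ω, g x = 0) ∧ (∀ x ∈ Ω, x ≠ y → -pLap G w p g x = 0) ∧
    -pLap G w p g y = (vMeas G w y)⁻¹

/-- If `u ≥ 0` is a nontrivial solution of `-Δ_p u ≥ u^σ`, then for every `R ≥ 1`,
`L_R = ∑_{x ∈ B_R} g_R(x)^σ μ(x) ≤ (σ/(σ-p+1)) (g_R(o)/u(o))^{σ-p+1}`. -/
theorem stmt4 {V : Type*} [Infinite V] (G : SimpleGraph V)
    (hconn : G.Connected) (hlf : ∀ x : V, {y | G.Adj x y}.Finite)
    (w : V → V → ℝ) (hwsymm : ∀ x y, w x y = w y x)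
    (hwpos : ∀ x y, G.Adj x y → 0 < w x y)
    (p σ : ℝ) (hp : 1 < p) (hσ : p - 1 < σ) (o : V)
    (R : ℕ) (hR : 1 ≤ R) (g : V → ℝ) (hg : IsGreen G w p (ballSet G o R) o g)
    (u : V → ℝ) (hu0 : ∀ x, 0 ≤ u x) (hune : u ≠ 0)
    (hsol : ∀ x, (u x) ^ σ ≤ -pLap G w p u x) :
    (∑ᶠ x ∈ ballSet G o R, (g x) ^ σ * vMeas G w x) ≤
      (σ / (σ - p + 1)) * (g o / u o) ^ (σ - p + 1) := by
  classical
  have hσpos : 0 < σ := by linarith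
  have hβ : 0 < σ - p + 1 := by linarith
  set B := ballSet G o R with hBdef
  have hBfin : B.Finite := ball_finite hconn hlf o R
  have hoB : o ∈ B := by
    simp [hBdef, ballSet, SimpleGraph.dist_self]
  have hμpos : ∀ x, 0 < vMeas G w x := vMeas_pos hconn hlf hwpos
  -- u is positive everywhere
  have huzero : ∀ x₀, u x₀ = 0 → ∀ x, u x = 0 := by
    intro x₀ hx₀
    refine prop_walk hconn (fun z => u z = 0) ?_ hx₀
    intro x y hx hxy
    have h1 := hsol x
    rw [hx, Real.zero_rpow hσpos.ne'] at h1
    have hμ := hμpos x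
    have hS : vMeas G w x * pLap G w p u x ≤ 0 := by
      have : pLap G w p u x ≤ 0 := by linarith
      exact mul_nonpos_of_nonneg_of_nonpos hμ.le this
    rw [mulLap hlf p u x hμ.ne'] at hS
    have hterms : ∀ y' ∈ (hlf x).toFinset, 0 ≤ w x y' * Phi p (u y' - u x) := by
      intro y' hy'
      apply mul_nonneg (hwpos _ _ ((hlf x).mem_toFinset.1 hy')).le
      apply Phi_nonneg hp
      rw [hx, sub_zero]
      exact hu0 y'
    have hS0 : ∑ y' ∈ (hlf x).toFinset, w x y' * Phi p (u y' - u x) = 0 :=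
      le_antisymm hS (Finset.sum_nonneg hterms)
    have hy0 := (Finset.sum_eq_zero_iff_of_nonneg hterms).1 hS0 y ((hlf x).mem_toFinset.2 hxy)
    have hw := hwpos x y hxy
    have hPhi0 : Phi p (u y - u x) = 0 := by
      rcases mul_eq_zero.1 hy0 with h | h
      · exact absurd h hw.ne'
      · exact h
    have := (Phi_eq_zero_iff hp).1 hPhi0
    rw [hx, sub_zero] at this
    exact this
  have hupos : ∀ x, 0 < u x := by
    intro x
    rcases (hu0 x).lt_or_eq with h | h
    · exact h
    · exfalso
      apply hune
      funext z
      exact huzero x h.symm z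
  -- g is nonnegative everywhere
  have hgnn : ∀ x, 0 ≤ g x := by
    by_contra hneg
    push_neg at hneg
    obtain ⟨x₀, hx₀⟩ := hneg
    have hx₀B : x₀ ∈ B := by
      by_contra h
      rw [hg.1 x₀ h] at hx₀
      linarith
    obtain ⟨b, hbB, hbmin⟩ := Finset.exists_min_image hBfin.toFinset g
      ⟨x₀, hBfin.mem_toFinset.2 hx₀B⟩
    have hgb : g b < 0 := lt_of_le_of_lt (hbmin x₀ (hBfin.mem_toFinset.2 hx₀B)) hx₀
    have hmin : ∀ y, g b ≤ g y := by
      intro y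
      by_cases hy : y ∈ B
      · exact hbmin y (hBfin.mem_toFinset.2 hy)
      · rw [hg.1 y hy]; linarith
    have hstep : ∀ ⦃z y⦄, g z = g b → G.Adj z y → g y = g b := by
      intro z y hz hzy
      have hzB : z ∈ B := by
        by_contra h
        rw [hg.1 z h] at hz
        linarith
      have hμ := hμpos z
      have hLnn : 0 ≤ pLap G w p g z := by
        rw [pLap]
        apply mul_nonneg (inv_nonneg.2 hμ.le)
        rw [finsum_mem_eq_finite_toFinset_sum _ (hlf z)]
        apply Finset.sum_nonneg
        intro y' hy'
        apply mul_nonneg (hwpos _ _ ((hlf z).mem_toFinset.1 hy')).le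
        apply Phi_nonneg hp
        rw [hz]
        linarith [hmin y']
      have hzo : z ≠ o := by
        rintro rfl
        have h2 := hg.2.2
        have : (0:ℝ) < (vMeas G w z)⁻¹ := inv_pos.2 hμ
        linarith
      have h0 := hg.2.1 z hzB hzo
      have hS : vMeas G w z * pLap G w p g z = 0 := by
        have : pLap G w p g z = 0 := by linarith
        rw [this, mul_zero]
      rw [mulLap hlf p g z hμ.ne'] at hS
      have hterms : ∀ y' ∈ (hlf z).toFinset, 0 ≤ w z y' * Phi p (g y' - g z) := by
        intro y' hy'
        apply mul_nonneg (hwpos _ _ ((hlf z).mem_toFinset.1 hy')).le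
        apply Phi_nonneg hp
        rw [hz]
        linarith [hmin y']
      have hy0 := (Finset.sum_eq_zero_iff_of_nonneg hterms).1 hS y ((hlf z).mem_toFinset.2 hzy)
      have hw := hwpos z y hzy
      have hPhi0 : Phi p (g y - g z) = 0 := by
        rcases mul_eq_zero.1 hy0 with h | h
        · exact absurd h hw.ne'
        · exact h
      have := (Phi_eq_zero_iff hp).1 hPhi0
      rw [hz] at this
      linarith
    have hall := prop_walk hconn (fun z => g z = g b) hstep (rfl : g b = g b)
    obtain ⟨xout, hxout⟩ := (hBfin.infinite_compl).nonempty
    have h5 : g xout = g b := hall xout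
    have hz0 : g xout = 0 := hg.1 xout hxout
    rw [hz0] at h5
    linarith
  -- Finset setup
  set Bf := hBfin.toFinset with hBf
  set Nf : V → Finset V := fun x => (hlf x).toFinset with hNfdef
  set T : Finset V := Bf ∪ Bf.biUnion Nf with hTdef
  set E : Finset (V × V) := (T ×ˢ T).filter (fun z => G.Adj z.1 z.2) with hEdef
  have hBT : Bf ⊆ T := Finset.subset_union_left
  have hNT : ∀ x ∈ Bf, Nf x ⊆ T := by
    intro x hx y hy
    exact Finset.mem_union_right _ (Finset.mem_biUnion.2 ⟨x, hx, hy⟩)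
  have hmem_Nf : ∀ {x y : V}, y ∈ Nf x ↔ G.Adj x y := by
    intro x y; rw [hNfdef]; exact (hlf x).mem_toFinset
  have hmemE : ∀ z ∈ E, G.Adj z.1 z.2 := by
    intro z hz
    exact (Finset.mem_filter.1 hz).2
  -- rearrangement (discrete Green identity)
  have rearr : ∀ (f θ : V → ℝ), (∀ x, x ∉ B → θ x = 0) →
      ∑ x ∈ T, θ x * (vMeas G w x * (-pLap G w p f x))
        = (1/2) * ∑ z ∈ E, (w z.1 z.2 * Phi p (f z.2 - f z.1)) * (θ z.2 - θ z.1) := by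
    intro f θ hθ0
    have step1 : ∀ x ∈ T, θ x * (vMeas G w x * pLap G w p f x)
        = ∑ y ∈ T.filter (fun y => G.Adj x y), θ x * (w x y * Phi p (f y - f x)) := by
      intro x _
      rw [mulLap hlf p f x (hμpos x).ne']
      by_cases hθx : θ x = 0
      · simp [hθx]
      · have hxB : x ∈ Bf := by
          rw [hBf, hBfin.mem_toFinset]
          by_contra h
          exact hθx (hθ0 x h)
        have hfilter : T.filter (fun y => G.Adj x y) = Nf x := by
          ext y
          simp only [Finset.mem_filter]
          constructor
          · rintro ⟨-, h⟩; exact hmem_Nf.2 h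
          · intro hy; exact ⟨hNT x hxB hy, hmem_Nf.1 hy⟩
        rw [hfilter, hNfdef, Finset.mul_sum]
    have hD : ∑ x ∈ T, θ x * (vMeas G w x * pLap G w p f x)
        = ∑ z ∈ E, θ z.1 * (w z.1 z.2 * Phi p (f z.2 - f z.1)) := by
      calc ∑ x ∈ T, θ x * (vMeas G w x * pLap G w p f x)
          = ∑ x ∈ T, ∑ y ∈ T.filter (fun y => G.Adj x y),
              θ x * (w x y * Phi p (f y - f x)) := Finset.sum_congr rfl step1
        _ = ∑ x ∈ T, ∑ y ∈ T,
              if G.Adj x y then θ x * (w x y * Phi p (f y - f x)) else 0 :=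
            Finset.sum_congr rfl (fun x _ => Finset.sum_filter _ _)
        _ = ∑ z ∈ T ×ˢ T,
              if G.Adj z.1 z.2 then θ z.1 * (w z.1 z.2 * Phi p (f z.2 - f z.1)) else 0 :=
            (Finset.sum_product' _ _ _).symm
        _ = ∑ z ∈ E, θ z.1 * (w z.1 z.2 * Phi p (f z.2 - f z.1)) :=
            (Finset.sum_filter _ _).symm
    have hEswap : ∀ z ∈ E, (z.2, z.1) ∈ E := by
      intro z hz
      rw [hEdef, Finset.mem_filter] at hz ⊢
      obtain ⟨hzp, hadj⟩ := hz
      rw [Finset.mem_product] at hzp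
      exact ⟨Finset.mem_product.2 ⟨hzp.2, hzp.1⟩, hadj.symm⟩
    have hswap : ∑ z ∈ E, θ z.1 * (w z.1 z.2 * Phi p (f z.2 - f z.1))
        = -∑ z ∈ E, θ z.2 * (w z.1 z.2 * Phi p (f z.2 - f z.1)) := by
      have h1 : ∑ z ∈ E, θ z.1 * (w z.1 z.2 * Phi p (f z.2 - f z.1))
          = ∑ z ∈ E, θ z.2 * (w z.2 z.1 * Phi p (f z.1 - f z.2)) := by
        refine Finset.sum_nbij' (fun z => (z.2, z.1)) (fun z => (z.2, z.1)) ?_ ?_ ?_ ?_ ?_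
        · exact hEswap
        · exact hEswap
        · intro z _; rfl
        · intro z _; rfl
        · intro z _; rfl
      rw [h1, ← Finset.sum_neg_distrib]
      refine Finset.sum_congr rfl fun z _ => ?_
      have e1 : Phi p (f z.1 - f z.2) = -Phi p (f z.2 - f z.1) := by
        rw [← neg_sub (f z.2) (f z.1), Phi_neg]
      rw [hwsymm z.2 z.1, e1]
      ring
    have hL1 : ∑ x ∈ T, θ x * (vMeas G w x * (-pLap G w p f x))
        = -∑ x ∈ T, θ x * (vMeas G w x * pLap G w p f x) := by
      rw [← Finset.sum_neg_distrib]
      exact Finset.sum_congr rfl fun x _ => by ring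
    have hsplit : ∑ z ∈ E, (w z.1 z.2 * Phi p (f z.2 - f z.1)) * (θ z.2 - θ z.1)
        = (∑ z ∈ E, θ z.2 * (w z.1 z.2 * Phi p (f z.2 - f z.1)))
          - ∑ z ∈ E, θ z.1 * (w z.1 z.2 * Phi p (f z.2 - f z.1)) := by
      rw [← Finset.sum_sub_distrib]
      exact Finset.sum_congr rfl fun z _ => by ring
    rw [hL1, hD, hsplit]
    linarith [hswap]
  -- test functions
  set ψ : V → ℝ := fun x => (g x / u x) ^ σ with hψdef
  set φ : V → ℝ := fun x => (g x / u x) ^ (σ - p + 1) with hφdef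
  have hψ0 : ∀ x, x ∉ B → ψ x = 0 := by
    intro x hx
    rw [hψdef]
    simp only
    rw [hg.1 x hx, zero_div, Real.zero_rpow hσpos.ne']
  have hφ0 : ∀ x, x ∉ B → φ x = 0 := by
    intro x hx
    rw [hφdef]
    simp only
    rw [hg.1 x hx, zero_div, Real.zero_rpow hβ.ne']
  have hψnn : ∀ x, 0 ≤ ψ x := by
    intro x
    exact Real.rpow_nonneg (div_nonneg (hgnn x) (hupos x).le) σ
  -- the chain
  have hLeq : (∑ᶠ x ∈ B, g x ^ σ * vMeas G w x)
      = ∑ x ∈ Bf, ψ x * (vMeas G w x * u x ^ σ) := by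
    rw [finsum_mem_eq_finite_toFinset_sum _ hBfin]
    refine Finset.sum_congr rfl fun x hx => ?_
    have hx' : ψ x * u x ^ σ = g x ^ σ := by
      rw [hψdef]
      simp only
      rw [Real.div_rpow (hgnn x) (hupos x).le, div_mul_cancel₀]
      exact (Real.rpow_pos_of_pos (hupos x) σ).ne'
    rw [← hx']
    ring
  have hstepB : ∑ x ∈ Bf, ψ x * (vMeas G w x * u x ^ σ)
      ≤ ∑ x ∈ Bf, ψ x * (vMeas G w x * (-pLap G w p u x)) := by
    refine Finset.sum_le_sum fun x _ => ?_
    apply mul_le_mul_of_nonneg_left _ (hψnn x)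
    exact mul_le_mul_of_nonneg_left (hsol x) (hμpos x).le
  have hstepC : ∑ x ∈ Bf, ψ x * (vMeas G w x * (-pLap G w p u x))
      = ∑ x ∈ T, ψ x * (vMeas G w x * (-pLap G w p u x)) := by
    refine Finset.sum_subset hBT fun x _ hx => ?_
    have : ψ x = 0 := hψ0 x (by rwa [hBf, hBfin.mem_toFinset] at hx)
    rw [this, zero_mul]
  have hstepE : ∑ z ∈ E, (w z.1 z.2 * Phi p (u z.2 - u z.1)) * (ψ z.2 - ψ z.1)
      ≤ ∑ z ∈ E, (σ / (σ - p + 1)) *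
          ((w z.1 z.2 * Phi p (g z.2 - g z.1)) * (φ z.2 - φ z.1)) := by
    refine Finset.sum_le_sum fun z hz => ?_
    have hadj := hmemE z hz
    have hwz := hwpos _ _ hadj
    have hEW := EW hp hσ (hupos z.1) (hupos z.2) (hgnn z.1) (hgnn z.2)
    have h2 := mul_le_mul_of_nonneg_left hEW hwz.le
    calc (w z.1 z.2 * Phi p (u z.2 - u z.1)) * (ψ z.2 - ψ z.1)
        = w z.1 z.2 * (Phi p (u z.2 - u z.1) *
            ((g z.2 / u z.2) ^ σ - (g z.1 / u z.1) ^ σ)) := by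
          rw [hψdef]; ring
      _ ≤ w z.1 z.2 * ((σ / (σ - p + 1)) * (Phi p (g z.2 - g z.1) *
            ((g z.2 / u z.2) ^ (σ - p + 1) - (g z.1 / u z.1) ^ (σ - p + 1)))) := h2
      _ = (σ / (σ - p + 1)) *
          ((w z.1 z.2 * Phi p (g z.2 - g z.1)) * (φ z.2 - φ z.1)) := by
          rw [hφdef]; ring
  have hstepG : ∑ x ∈ T, φ x * (vMeas G w x * (-pLap G w p g x)) = φ o := by
    have hoT : o ∈ T := hBT (by rwa [hBf, hBfin.mem_toFinset])
    rw [Finset.sum_eq_single_of_mem o hoT]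
    · have h2 := hg.2.2
      rw [h2, mul_inv_cancel₀ (hμpos o).ne', mul_one]
    · intro x _ hxo
      by_cases hxB : x ∈ B
      · rw [hg.2.1 x hxB hxo, mul_zero, mul_zero]
      · rw [hφ0 x hxB, zero_mul]
  -- put it together
  have hrearr_u := rearr u ψ hψ0
  have hrearr_g := rearr g φ hφ0
  have hhalf : (0:ℝ) ≤ 1/2 := by norm_num
  have main : (∑ᶠ x ∈ B, g x ^ σ * vMeas G w x)
      ≤ (σ / (σ - p + 1)) * φ o := by
    calc (∑ᶠ x ∈ B, g x ^ σ * vMeas G w x)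
        = ∑ x ∈ Bf, ψ x * (vMeas G w x * u x ^ σ) := hLeq
      _ ≤ ∑ x ∈ Bf, ψ x * (vMeas G w x * (-pLap G w p u x)) := hstepB
      _ = ∑ x ∈ T, ψ x * (vMeas G w x * (-pLap G w p u x)) := hstepC
      _ = (1/2) * ∑ z ∈ E, (w z.1 z.2 * Phi p (u z.2 - u z.1)) * (ψ z.2 - ψ z.1) :=
          hrearr_u
      _ ≤ (1/2) * ∑ z ∈ E, (σ / (σ - p + 1)) *
            ((w z.1 z.2 * Phi p (g z.2 - g z.1)) * (φ z.2 - φ z.1)) :=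
          mul_le_mul_of_nonneg_left hstepE hhalf
      _ = (σ / (σ - p + 1)) *
            ((1/2) * ∑ z ∈ E, (w z.1 z.2 * Phi p (g z.2 - g z.1)) * (φ z.2 - φ z.1)) := by
          rw [← Finset.mul_sum]; ring
      _ = (σ / (σ - p + 1)) * (∑ x ∈ T, φ x * (vMeas G w x * (-pLap G w p g x))) := by
          rw [hrearr_g]
      _ = (σ / (σ - p + 1)) * φ o := by rw [hstepG]
  have hφo : φ o = (g o / u o) ^ (σ - p + 1) := by rw [hφdef]
  rwa [hφo] at main
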